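/- arXiv:2209.02621 — 3 statements merged into one kernel-verified Lean document; each statement's English description precedes it below -/
import Mathlib

section
/- Post-processing equivalent pairs of instruments have equal incompatibility robustness: if I₁ ~ Ĩ₁ and I₂ ~ Ĩ₂, then R_I(I₁, I₂) = R_I(Ĩ₁, Ĩ₂). -/
open Matrix
open scoped Kronecker BigOperators ComplexOrder

noncomputable section

namespace QI

/-- Linear maps between matrix algebras (superoperators). -/
abbrev MatMap (n m : Type*) [Fintype n] [Fintype m] :=
  Matrix n n ℂ →ₗ[ℂ] Matrix m m ℂ

variable {n m m₁ m₂ ι ι₁ ι₂ : Type*}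

/-- The Choi matrix of a superoperator. -/
def choi [Fintype n] [DecidableEq n] [Fintype m] (Φ : MatMap n m) :
    Matrix (n × m) (n × m) ℂ :=
  Matrix.of fun p q => Φ (Matrix.single p.1 q.1 1) p.2 q.2

/-- Complete positivity, via positive semidefiniteness of the Choi matrix. -/
def IsCP [Fintype n] [DecidableEq n] [Fintype m] (Φ : MatMap n m) : Prop :=
  (choi Φ).PosSemidef

/-- Trace preserving map. -/
def IsTP [Fintype n] [Fintype m] (Φ : MatMap n m) : Prop :=
  ∀ ρ, (Φ ρ).trace = ρ.trace

/-- Trace non-increasing map (on positive semidefinite inputs). -/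
def IsTNI [Fintype n] [Fintype m] (Φ : MatMap n m) : Prop :=
  ∀ ρ : Matrix n n ℂ, ρ.PosSemidef → (Φ ρ).trace.re ≤ ρ.trace.re

/-- A quantum channel: CP and trace preserving. -/
def IsChannel [Fintype n] [DecidableEq n] [Fintype m] (Φ : MatMap n m) : Prop :=
  IsCP Φ ∧ IsTP Φ

/-- A quantum instrument: a finite family of CP maps summing to a TP map. -/
structure Instrument (ι n m : Type*) [Fintype ι] [Fintype n] [DecidableEq n] [Fintype m] where
  op : ι → MatMap n m
  cp : ∀ x, IsCP (op x)
  tp : IsTP (∑ x, op x)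

/-- Partial trace over the second tensor factor, as a linear map. -/
def ptrace₂ [Fintype m₁] [Fintype m₂] :
    Matrix (m₁ × m₂) (m₁ × m₂) ℂ →ₗ[ℂ] Matrix m₁ m₁ ℂ where
  toFun M := Matrix.of fun i j => ∑ k, M (i, k) (j, k)
  map_add' M N := by ext i j; simp [Finset.sum_add_distrib]
  map_smul' c M := by ext i j; simp [Finset.mul_sum]

/-- Partial trace over the first tensor factor, as a linear map. -/
def ptrace₁ [Fintype m₁] [Fintype m₂] :
    Matrix (m₁ × m₂) (m₁ × m₂) ℂ →ₗ[ℂ] Matrix m₂ m₂ ℂ where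
  toFun M := Matrix.of fun i j => ∑ k, M (k, i) (k, j)
  map_add' M N := by ext i j; simp [Finset.sum_add_distrib]
  map_smul' c M := by ext i j; simp [Finset.mul_sum]

/-- Parallel compatibility of two instruments. -/
def ParallelCompatible [Fintype ι₁] [Fintype ι₂] [Fintype n] [DecidableEq n]
    [Fintype m₁] [Fintype m₂]
    (I₁ : Instrument ι₁ n m₁) (I₂ : Instrument ι₂ n m₂) : Prop :=
  ∃ J : Instrument (ι₁ × ι₂) n (m₁ × m₂),
    (∀ x, ∑ y, ptrace₂ ∘ₗ J.op (x, y) = I₁.op x) ∧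
    (∀ y, ∑ x, ptrace₁ ∘ₗ J.op (x, y) = I₂.op y)

/-- The dual (Heisenberg picture) of a superoperator, characterized by
`tr[Φ(ρ) M] = tr[ρ Φ*(M)]`. -/
def dualMap [Fintype n] [DecidableEq n] [Fintype m] (Φ : MatMap n m) (M : Matrix m m ℂ) :
    Matrix n n ℂ :=
  Matrix.of fun i j => (Φ (Matrix.single j i 1) * M).trace

/-- A POVM: positive semidefinite effects summing to the identity. -/
def IsPOVM [Fintype n] [DecidableEq n] (A : ι → Matrix n n ℂ) [Fintype ι] : Prop :=
  (∀ x, (A x).PosSemidef) ∧ ∑ x, A x = 1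

/-- The POVM induced by an instrument: `A(x) = Φ_x*(𝟙)`. -/
def inducedPOVM [Fintype ι] [Fintype n] [DecidableEq n] [Fintype m] [DecidableEq m]
    (I : Instrument ι n m) (x : ι) : Matrix n n ℂ :=
  dualMap (I.op x) 1

/-- Compatibility of two POVMs via a joint POVM. -/
def POVMsCompatible [Fintype ι₁] [Fintype ι₂] [Fintype n] [DecidableEq n]
    (A₁ : ι₁ → Matrix n n ℂ) (A₂ : ι₂ → Matrix n n ℂ) : Prop :=
  ∃ G : ι₁ × ι₂ → Matrix n n ℂ, IsPOVM G ∧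
    (∀ x, ∑ y, G (x, y) = A₁ x) ∧ (∀ y, ∑ x, G (x, y) = A₂ y)

/-- Compatibility of two channels via a joint channel. -/
def ChannelsCompatible [Fintype n] [DecidableEq n] [Fintype m₁] [Fintype m₂]
    (Φ₁ : MatMap n m₁) (Φ₂ : MatMap n m₂) : Prop :=
  ∃ Λ : MatMap n (m₁ × m₂), IsChannel Λ ∧
    ptrace₂ ∘ₗ Λ = Φ₁ ∧ ptrace₁ ∘ₗ Λ = Φ₂

/-- Generalized incompatibility robustness of a pair of instruments. -/
def RI [Fintype ι₁] [Fintype ι₂] [Fintype n] [DecidableEq n]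
    [Fintype m₁] [Fintype m₂]
    (I₁ : Instrument ι₁ n m₁) (I₂ : Instrument ι₂ n m₂) : ℝ :=
  sInf {r : ℝ | 0 ≤ r ∧
    ∃ (N₁ : Instrument ι₁ n m₁) (N₂ : Instrument ι₂ n m₂)
      (J : Instrument (ι₁ × ι₂) n (m₁ × m₂)),
      (∀ x, ((1 + r : ℝ) : ℂ)⁻¹ • (I₁.op x + (r : ℂ) • N₁.op x)
          = ∑ y, ptrace₂ ∘ₗ J.op (x, y)) ∧
      (∀ y, ((1 + r : ℝ) : ℂ)⁻¹ • (I₂.op y + (r : ℂ) • N₂.op y)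
          = ∑ x, ptrace₁ ∘ₗ J.op (x, y))}

/-- Generalized incompatibility robustness of a pair of POVMs. -/
def RM [Fintype ι₁] [Fintype ι₂] [Fintype n] [DecidableEq n]
    (A₁ : ι₁ → Matrix n n ℂ) (A₂ : ι₂ → Matrix n n ℂ) : ℝ :=
  sInf {r : ℝ | 0 ≤ r ∧
    ∃ (B₁ : ι₁ → Matrix n n ℂ) (B₂ : ι₂ → Matrix n n ℂ) (G : ι₁ × ι₂ → Matrix n n ℂ),
      IsPOVM B₁ ∧ IsPOVM B₂ ∧ (∀ p, (G p).PosSemidef) ∧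
      (∀ x, ((1 + r : ℝ) : ℂ)⁻¹ • (A₁ x + (r : ℂ) • B₁ x) = ∑ y, G (x, y)) ∧
      (∀ y, ((1 + r : ℝ) : ℂ)⁻¹ • (A₂ y + (r : ℂ) • B₂ y) = ∑ x, G (x, y))}

/-- Generalized incompatibility robustness of a pair of channels. -/
def RC [Fintype n] [DecidableEq n] [Fintype m₁] [Fintype m₂]
    (Φ₁ : MatMap n m₁) (Φ₂ : MatMap n m₂) : ℝ :=
  sInf {r : ℝ | 0 ≤ r ∧
    ∃ (N₁ : MatMap n m₁) (N₂ : MatMap n m₂) (Λ : MatMap n (m₁ × m₂)),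
      IsChannel N₁ ∧ IsChannel N₂ ∧ IsChannel Λ ∧
      ((1 + r : ℝ) : ℂ)⁻¹ • (Φ₁ + (r : ℂ) • N₁) = ptrace₂ ∘ₗ Λ ∧
      ((1 + r : ℝ) : ℂ)⁻¹ • (Φ₂ + (r : ℂ) • N₂) = ptrace₁ ∘ₗ Λ}

/-- Post-processing relation on instruments: `I₂ ≲ I₁`. -/
def PostProcessingOf [Fintype ι₁] [Fintype ι₂] [Fintype n] [DecidableEq n]
    [Fintype m₁] [DecidableEq m₁] [Fintype m₂]
    (I₂ : Instrument ι₂ n m₂) (I₁ : Instrument ι₁ n m₁) : Prop :=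
  ∃ R : ι₁ → Instrument ι₂ m₁ m₂,
    ∀ y, I₂.op y = ∑ x, (R x).op y ∘ₗ I₁.op x

/-- A density matrix (quantum state). -/
def IsState [Fintype m] (η : Matrix m m ℂ) : Prop :=
  η.PosSemidef ∧ η.trace = 1

/-- A pure state. -/
def IsPureState [Fintype m] (η : Matrix m m ℂ) : Prop :=
  ∃ v : m → ℂ, (∑ i, star (v i) * v i) = 1 ∧ η = Matrix.vecMulVec v (star v)

/-- The trash-and-prepare map `ρ ↦ tr(ρ) • η`. -/
def trashPrep [Fintype n] [Fintype m] (η : Matrix m m ℂ) : MatMap n m :=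
  (Matrix.traceLinearMap n ℂ ℂ).smulRight η

/-- Tensoring with a fixed matrix on the right, as a linear map. -/
def kronRight [Fintype m₁] [Fintype m₂] (B : Matrix m₂ m₂ ℂ) :
    Matrix m₁ m₁ ℂ →ₗ[ℂ] Matrix (m₁ × m₂) (m₁ × m₂) ℂ where
  toFun A := A ⊗ₖ B
  map_add' A A' := by ext ⟨i, k⟩ ⟨j, l⟩; simp [Matrix.kroneckerMap_apply, add_mul]
  map_smul' c A := by ext ⟨i, k⟩ ⟨j, l⟩; simp [Matrix.kroneckerMap_apply, mul_assoc]

/-- Tensoring with a fixed matrix on the left, as a linear map. -/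
def kronLeft [Fintype m₁] [Fintype m₂] (A : Matrix m₁ m₁ ℂ) :
    Matrix m₂ m₂ ℂ →ₗ[ℂ] Matrix (m₁ × m₂) (m₁ × m₂) ℂ where
  toFun B := A ⊗ₖ B
  map_add' B B' := by ext ⟨i, k⟩ ⟨j, l⟩; simp [Matrix.kroneckerMap_apply, mul_add]
  map_smul' c B := by
    ext ⟨i, k⟩ ⟨j, l⟩
    simp only [Matrix.kroneckerMap_apply, Matrix.smul_apply, smul_eq_mul, RingHom.id_apply]
    ring

/-- Measure-and-prepare operation: `ρ ↦ tr(ρ A) • σ`. -/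
def mpOp [Fintype n] [Fintype m] (A : Matrix n n ℂ) (σ : Matrix m m ℂ) : MatMap n m where
  toFun ρ := (ρ * A).trace • σ
  map_add' ρ ρ' := by simp [Matrix.add_mul, Matrix.trace_add, add_smul]
  map_smul' c ρ := by simp [Matrix.smul_mul, Matrix.trace_smul, smul_smul]

/-- Conjugation by a Kraus operator: `ρ ↦ K ρ K†`. -/
def krausOp [Fintype n] [Fintype m] (K : Matrix m n ℂ) : MatMap n m where
  toFun ρ := K * ρ * Kᴴ
  map_add' ρ ρ' := by simp [Matrix.mul_add, Matrix.add_mul]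
  map_smul' c ρ := by simp [Matrix.mul_smul, Matrix.smul_mul]

end QI

namespace QI
section Dev
variable {n m k : Type*}

lemma sum_rot₃ {α β γ M : Type*} [Fintype α] [Fintype β] [Fintype γ] [AddCommMonoid M]
    (f : α → β → γ → M) :
    ∑ a, ∑ b, ∑ c, f a b c = ∑ b, ∑ c, ∑ a, f a b c := by
  rw [Finset.sum_comm]
  exact Finset.sum_congr rfl fun b _ => Finset.sum_comm

lemma sum_rot₃' {α β γ M : Type*} [Fintype α] [Fintype β] [Fintype γ] [AddCommMonoid M]
    (f : α → β → γ → M) :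
    ∑ a, ∑ b, ∑ c, f a b c = ∑ c, ∑ a, ∑ b, f a b c :=
  (sum_rot₃ fun c a b => f a b c).symm

lemma matMap_apply [Fintype n] [DecidableEq n] [Fintype m]
    (Φ : MatMap n m) (ρ : Matrix n n ℂ) (p q : m) :
    Φ ρ p q = ∑ a, ∑ b, ρ a b * Φ (Matrix.single a b 1) p q := by
  conv_lhs => rw [Matrix.matrix_eq_sum_single ρ]
  have h : ∀ a b, Matrix.single a b (ρ a b)
      = ρ a b • Matrix.single a b (1 : ℂ) := by
    intro a b; simp
  simp only [h, map_sum, _root_.map_smul, Matrix.sum_apply, Matrix.smul_apply, smul_eq_mul]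

lemma krausOp_stdBasis [Fintype n] [DecidableEq n] [Fintype m]
    (K : Matrix m n ℂ) (a b : n) (p q : m) :
    krausOp K (Matrix.single a b 1) p q = K p a * star (K q b) := by
  show (K * Matrix.single a b (1 : ℂ) * Kᴴ) p q = _
  simp [Matrix.mul_apply, Matrix.single, Matrix.conjTranspose_apply,
    Finset.mul_sum, mul_ite, ite_mul, ite_and, Finset.sum_ite_eq, Finset.sum_ite_eq']

lemma isCP_krausOp [Fintype n] [DecidableEq n] [Fintype m] (K : Matrix m n ℂ) :
    IsCP (krausOp K) := by
  have h : choi (krausOp K)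
      = (Matrix.of fun (_ : Unit) (p : n × m) => star (K p.2 p.1))ᴴ
        * (Matrix.of fun (_ : Unit) (p : n × m) => star (K p.2 p.1)) := by
    ext p q
    simp [choi, krausOp_stdBasis, Matrix.mul_apply, Matrix.conjTranspose_apply, mul_comm]
  rw [IsCP, h]
  exact Matrix.posSemidef_conjTranspose_mul_self _

lemma choi_sum {ι : Type*} [Fintype n] [DecidableEq n] [Fintype m]
    (s : Finset ι) (f : ι → MatMap n m) :
    choi (∑ i ∈ s, f i) = ∑ i ∈ s, choi (f i) := by
  ext p q
  simp [choi, LinearMap.sum_apply, Matrix.sum_apply]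

lemma isCP_sum {ι : Type*} [Fintype n] [DecidableEq n] [Fintype m]
    (s : Finset ι) (f : ι → MatMap n m) (h : ∀ i ∈ s, IsCP (f i)) :
    IsCP (∑ i ∈ s, f i) := by
  rw [IsCP, choi_sum]
  exact Finset.sum_induction _ _ (fun a b ha hb => ha.add hb) .zero h

lemma IsCP.kraus [Fintype n] [DecidableEq n] [Fintype m] {Φ : MatMap n m}
    (h : IsCP Φ) :
    ∃ K : (n × m) → Matrix m n ℂ, Φ = ∑ i, krausOp (K i) := by
  obtain ⟨B, hB⟩ : ∃ B : Matrix (n × m) (n × m) ℂ, choi Φ = Bᴴ * B := by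
    classical
    open scoped MatrixOrder in
    obtain ⟨B, hB⟩ := CStarAlgebra.nonneg_iff_eq_star_mul_self.mp h.nonneg
    exact ⟨B, hB⟩
  refine ⟨fun i => Matrix.of fun c a => star (B i (a, c)), ?_⟩
  apply LinearMap.ext; intro ρ
  ext p q
  rw [matMap_apply Φ]
  have hchoi : ∀ a b, Φ (Matrix.single a b 1) p q = choi Φ (a, p) (b, q) :=
    fun a b => rfl
  have hk : ∀ i : n × m, krausOp (Matrix.of fun c a => star (B i (a, c))) ρ p q
      = ∑ a, ∑ b, star (B i (a, p)) * ρ a b * B i (b, q) := by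
    intro i
    show ((Matrix.of fun c a => star (B i (a, c))) * ρ
        * (Matrix.of fun c a => star (B i (a, c)))ᴴ) p q = _
    simp only [Matrix.mul_apply, Matrix.conjTranspose_apply, Matrix.of_apply,
      Finset.sum_mul, star_star]
    rw [Finset.sum_comm]
  simp only [hchoi, hB, Matrix.mul_apply, Matrix.conjTranspose_apply,
    LinearMap.sum_apply, Matrix.sum_apply, hk, Finset.mul_sum]
  rw [sum_rot₃']
  refine Finset.sum_congr rfl fun i _ => Finset.sum_congr rfl fun a _ =>
    Finset.sum_congr rfl fun b _ => by ring

end Dev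
end QI
namespace QI
section Dev2
variable {n m k m₁ m₂ k₁ k₂ : Type*}

lemma sum4_comm {α β γ δ M : Type*} [Fintype α] [Fintype β] [Fintype γ] [Fintype δ] [AddCommMonoid M]
    (f : α → β → γ → δ → M) :
    ∑ a, ∑ b, ∑ c, ∑ d, f a b c d = ∑ c, ∑ d, ∑ a, ∑ b, f a b c d := by
  calc ∑ a, ∑ b, ∑ c, ∑ d, f a b c d
      = ∑ p : α × β, ∑ q : γ × δ, f p.1 p.2 q.1 q.2 := by
        simp only [Fintype.sum_prod_type]
    _ = ∑ q : γ × δ, ∑ p : α × β, f p.1 p.2 q.1 q.2 := Finset.sum_comm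
    _ = ∑ c, ∑ d, ∑ a, ∑ b, f a b c d := by
        simp only [Fintype.sum_prod_type]

/-- Tensor product of superoperators. -/
def tensorMap [Fintype m₁] [DecidableEq m₁] [Fintype m₂] [DecidableEq m₂]
    [Fintype k₁] [Fintype k₂]
    (Φ : MatMap m₁ k₁) (Ψ : MatMap m₂ k₂) : MatMap (m₁ × m₂) (k₁ × k₂) where
  toFun M := Matrix.of fun p q => ∑ a, ∑ a', ∑ b, ∑ b',
    M (a, a') (b, b') * (Φ (Matrix.single a b 1) p.1 q.1
      * Ψ (Matrix.single a' b' 1) p.2 q.2)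
  map_add' M N := by
    ext p q
    simp [Finset.sum_add_distrib, add_mul]
  map_smul' c M := by
    ext p q
    simp [Finset.mul_sum, mul_assoc]

lemma tensorMap_apply [Fintype m₁] [DecidableEq m₁] [Fintype m₂] [DecidableEq m₂]
    [Fintype k₁] [Fintype k₂]
    (Φ : MatMap m₁ k₁) (Ψ : MatMap m₂ k₂) (M : Matrix (m₁ × m₂) (m₁ × m₂) ℂ)
    (p q : k₁ × k₂) :
    tensorMap Φ Ψ M p q = ∑ a, ∑ a', ∑ b, ∑ b',
      M (a, a') (b, b') * (Φ (Matrix.single a b 1) p.1 q.1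
        * Ψ (Matrix.single a' b' 1) p.2 q.2) := rfl

lemma tensorMap_kraus [Fintype m₁] [DecidableEq m₁] [Fintype m₂] [DecidableEq m₂]
    [Fintype k₁] [Fintype k₂]
    (K : Matrix k₁ m₁ ℂ) (L : Matrix k₂ m₂ ℂ) :
    tensorMap (krausOp K) (krausOp L) = krausOp (K ⊗ₖ L) := by
  apply LinearMap.ext; intro M
  ext p q
  rw [tensorMap_apply]
  have hrhs : krausOp (K ⊗ₖ L) M p q = ∑ a : m₁, ∑ a' : m₂, ∑ b : m₁, ∑ b' : m₂,
      (K p.1 a * L p.2 a') * M (a, a') (b, b') * star (K q.1 b * L q.2 b') := by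
    show ((K ⊗ₖ L) * M * (K ⊗ₖ L)ᴴ) p q = _
    simp only [Matrix.mul_apply, Matrix.conjTranspose_apply, Finset.sum_mul]
    rw [Finset.sum_comm]
    simp only [Fintype.sum_prod_type, Matrix.kroneckerMap_apply]
  rw [hrhs]
  refine Finset.sum_congr rfl fun a _ => Finset.sum_congr rfl fun a' _ =>
    Finset.sum_congr rfl fun b _ => Finset.sum_congr rfl fun b' _ => ?_
  simp only [krausOp_stdBasis, star_mul']
  ring

end Dev2
end QI
namespace QI
section Dev3
variable {n m k m₁ m₂ k₁ k₂ ι : Type*}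

lemma krausOp_comp [Fintype n] [Fintype m] [Fintype k]
    (K : Matrix k m ℂ) (L : Matrix m n ℂ) :
    krausOp K ∘ₗ krausOp L = krausOp (K * L) := by
  apply LinearMap.ext; intro ρ
  show K * (L * ρ * Lᴴ) * Kᴴ = (K * L) * ρ * (K * L)ᴴ
  simp [Matrix.conjTranspose_mul, Matrix.mul_assoc]

lemma sum_comp' [Fintype n] [Fintype m] [Fintype k]
    (s : Finset ι) (f : ι → MatMap m k) (g : MatMap n m) :
    (∑ i ∈ s, f i) ∘ₗ g = ∑ i ∈ s, f i ∘ₗ g := by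
  apply LinearMap.ext; intro ρ; simp [LinearMap.sum_apply]

lemma comp_sum' [Fintype n] [Fintype m] [Fintype k]
    (g : MatMap m k) (s : Finset ι) (f : ι → MatMap n m) :
    g ∘ₗ (∑ i ∈ s, f i) = ∑ i ∈ s, g ∘ₗ f i := by
  apply LinearMap.ext; intro ρ; simp [LinearMap.sum_apply, map_sum]

lemma IsCP.comp [Fintype n] [DecidableEq n] [Fintype m] [DecidableEq m] [Fintype k]
    {Φ : MatMap m k} {Ψ : MatMap n m} (hΦ : IsCP Φ) (hΨ : IsCP Ψ) :
    IsCP (Φ ∘ₗ Ψ) := by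
  obtain ⟨K, rfl⟩ := hΦ.kraus
  obtain ⟨L, rfl⟩ := hΨ.kraus
  rw [sum_comp']
  refine isCP_sum _ _ fun i _ => ?_
  rw [comp_sum']
  refine isCP_sum _ _ fun j _ => ?_
  rw [krausOp_comp]
  exact isCP_krausOp _

lemma tensorMap_add_left [Fintype m₁] [DecidableEq m₁] [Fintype m₂] [DecidableEq m₂]
    [Fintype k₁] [Fintype k₂]
    (Φ Φ' : MatMap m₁ k₁) (Ψ : MatMap m₂ k₂) :
    tensorMap (Φ + Φ') Ψ = tensorMap Φ Ψ + tensorMap Φ' Ψ := by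
  apply LinearMap.ext; intro M
  ext p q
  simp only [LinearMap.add_apply, Matrix.add_apply, tensorMap_apply,
    ← Finset.sum_add_distrib]
  refine Finset.sum_congr rfl fun a _ => Finset.sum_congr rfl fun a' _ =>
    Finset.sum_congr rfl fun b _ => Finset.sum_congr rfl fun b' _ => by ring

lemma tensorMap_add_right [Fintype m₁] [DecidableEq m₁] [Fintype m₂] [DecidableEq m₂]
    [Fintype k₁] [Fintype k₂]
    (Φ : MatMap m₁ k₁) (Ψ Ψ' : MatMap m₂ k₂) :
    tensorMap Φ (Ψ + Ψ') = tensorMap Φ Ψ + tensorMap Φ Ψ' := by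
  apply LinearMap.ext; intro M
  ext p q
  simp only [LinearMap.add_apply, Matrix.add_apply, tensorMap_apply,
    ← Finset.sum_add_distrib]
  refine Finset.sum_congr rfl fun a _ => Finset.sum_congr rfl fun a' _ =>
    Finset.sum_congr rfl fun b _ => Finset.sum_congr rfl fun b' _ => by ring

lemma tensorMap_zero_left [Fintype m₁] [DecidableEq m₁] [Fintype m₂] [DecidableEq m₂]
    [Fintype k₁] [Fintype k₂] (Ψ : MatMap m₂ k₂) :
    tensorMap (0 : MatMap m₁ k₁) Ψ = 0 := by
  apply LinearMap.ext; intro M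
  ext p q
  simp [tensorMap_apply]

lemma tensorMap_zero_right [Fintype m₁] [DecidableEq m₁] [Fintype m₂] [DecidableEq m₂]
    [Fintype k₁] [Fintype k₂] (Φ : MatMap m₁ k₁) :
    tensorMap Φ (0 : MatMap m₂ k₂) = 0 := by
  apply LinearMap.ext; intro M
  ext p q
  simp [tensorMap_apply]

lemma tensorMap_sum_left [Fintype m₁] [DecidableEq m₁] [Fintype m₂] [DecidableEq m₂]
    [Fintype k₁] [Fintype k₂]
    (s : Finset ι) (Φ : ι → MatMap m₁ k₁) (Ψ : MatMap m₂ k₂) :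
    tensorMap (∑ i ∈ s, Φ i) Ψ = ∑ i ∈ s, tensorMap (Φ i) Ψ := by
  induction s using Finset.cons_induction with
  | empty => simpa using tensorMap_zero_left Ψ
  | cons i s hi ih => simp [Finset.sum_cons, tensorMap_add_left, ih]

lemma tensorMap_sum_right [Fintype m₁] [DecidableEq m₁] [Fintype m₂] [DecidableEq m₂]
    [Fintype k₁] [Fintype k₂]
    (Φ : MatMap m₁ k₁) (s : Finset ι) (Ψ : ι → MatMap m₂ k₂) :
    tensorMap Φ (∑ i ∈ s, Ψ i) = ∑ i ∈ s, tensorMap Φ (Ψ i) := by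
  induction s using Finset.cons_induction with
  | empty => simpa using tensorMap_zero_right Φ
  | cons i s hi ih => simp [Finset.sum_cons, tensorMap_add_right, ih]

lemma isCP_tensorMap [Fintype m₁] [DecidableEq m₁] [Fintype m₂] [DecidableEq m₂]
    [Fintype k₁] [Fintype k₂]
    {Φ : MatMap m₁ k₁} {Ψ : MatMap m₂ k₂} (hΦ : IsCP Φ) (hΨ : IsCP Ψ) :
    IsCP (tensorMap Φ Ψ) := by
  obtain ⟨K, rfl⟩ := hΦ.kraus
  obtain ⟨L, rfl⟩ := hΨ.kraus
  rw [tensorMap_sum_left]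
  refine isCP_sum _ _ fun i _ => ?_
  rw [tensorMap_sum_right]
  refine isCP_sum _ _ fun j _ => ?_
  rw [tensorMap_kraus]
  exact isCP_krausOp _

end Dev3
end QI
namespace QI
section Dev4
variable {n m k m₁ m₂ k₁ k₂ ι : Type*}

lemma trace_stdBasisMatrix' [Fintype m] [DecidableEq m] (a b : m) :
    (Matrix.single a b (1 : ℂ)).trace = if a = b then 1 else 0 := by
  classical
  simp only [Matrix.trace, Matrix.diag, Matrix.single, Matrix.of_apply]
  by_cases h : a = b
  · subst h; simp
  · rw [if_neg h, Finset.sum_eq_zero]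
    intro x _
    rw [if_neg]
    rintro ⟨rfl, rfl⟩
    exact h rfl

lemma trace_ptrace₂ [Fintype m₁] [Fintype m₂] (M : Matrix (m₁ × m₂) (m₁ × m₂) ℂ) :
    (ptrace₂ M).trace = M.trace := by
  simp [ptrace₂, Matrix.trace, Matrix.diag, Fintype.sum_prod_type]

lemma trace_ptrace₁ [Fintype m₁] [Fintype m₂] (M : Matrix (m₁ × m₂) (m₁ × m₂) ℂ) :
    (ptrace₁ M).trace = M.trace := by
  rw [show (ptrace₁ M).trace = ∑ i : m₂, ∑ j : m₁, M (j, i) (j, i) from rfl,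
    Finset.sum_comm,
    show M.trace = ∑ j : m₁, ∑ i : m₂, M (j, i) (j, i) from by
      simp [Matrix.trace, Matrix.diag, Fintype.sum_prod_type]]

lemma ptrace₂_tensorMap [Fintype m₁] [DecidableEq m₁] [Fintype m₂] [DecidableEq m₂]
    [Fintype k₁] [Fintype k₂]
    (Φ : MatMap m₁ k₁) {Ψ : MatMap m₂ k₂} (hΨ : IsTP Ψ) :
    ptrace₂ ∘ₗ tensorMap Φ Ψ = Φ ∘ₗ ptrace₂ := by
  have htr : ∀ a' b' : m₂, ∑ c', Ψ (Matrix.single a' b' 1) c' c'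
      = if a' = b' then (1 : ℂ) else 0 := by
    intro a' b'
    have h := hΨ (Matrix.single a' b' 1)
    rw [trace_stdBasisMatrix'] at h
    simpa [Matrix.trace, Matrix.diag] using h
  apply LinearMap.ext; intro M
  ext c d
  show ∑ c', tensorMap Φ Ψ M (c, c') (d, c') = Φ (ptrace₂ M) c d
  rw [matMap_apply Φ]
  have hps : ∀ a b, (ptrace₂ M) a b = ∑ a', M (a, a') (b, a') := fun a b => rfl
  simp only [tensorMap_apply, hps, Finset.sum_mul]
  rw [show (∑ a, ∑ b, ∑ a', M (a, a') (b, a') * Φ (Matrix.single a b 1) c d)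
      = ∑ a, ∑ a', ∑ b, M (a, a') (b, a') * Φ (Matrix.single a b 1) c d from
    Finset.sum_congr rfl fun a _ => Finset.sum_comm]
  conv_lhs => rw [Finset.sum_comm]
  refine Finset.sum_congr rfl fun a _ => ?_
  conv_lhs => rw [Finset.sum_comm]
  refine Finset.sum_congr rfl fun a' _ => ?_
  conv_lhs => rw [Finset.sum_comm]
  refine Finset.sum_congr rfl fun b _ => ?_
  conv_lhs => rw [Finset.sum_comm]
  have hcol : ∀ b' : m₂, ∑ c', M (a, a') (b, b')
      * (Φ (Matrix.single a b 1) c d * Ψ (Matrix.single a' b' 1) c' c')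
      = M (a, a') (b, b') * Φ (Matrix.single a b 1) c d
        * (if a' = b' then (1 : ℂ) else 0) := by
    intro b'
    rw [← htr a' b', Finset.mul_sum]
    refine Finset.sum_congr rfl fun c' _ => by ring
  simp only [hcol, mul_ite, mul_one, mul_zero, Finset.sum_ite_eq, Finset.mem_univ, if_true]

lemma ptrace₁_tensorMap [Fintype m₁] [DecidableEq m₁] [Fintype m₂] [DecidableEq m₂]
    [Fintype k₁] [Fintype k₂]
    {Φ : MatMap m₁ k₁} (Ψ : MatMap m₂ k₂) (hΦ : IsTP Φ) :
    ptrace₁ ∘ₗ tensorMap Φ Ψ = Ψ ∘ₗ ptrace₁ := by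
  have htr : ∀ a b : m₁, ∑ c, Φ (Matrix.single a b 1) c c
      = if a = b then (1 : ℂ) else 0 := by
    intro a b
    have h := hΦ (Matrix.single a b 1)
    rw [trace_stdBasisMatrix'] at h
    simpa [Matrix.trace, Matrix.diag] using h
  apply LinearMap.ext; intro M
  ext c' d'
  show ∑ c, tensorMap Φ Ψ M (c, c') (c, d') = Ψ (ptrace₁ M) c' d'
  rw [matMap_apply Ψ]
  have hps : ∀ a' b', (ptrace₁ M) a' b' = ∑ a, M (a, a') (a, b') := fun a b => rfl
  simp only [tensorMap_apply, hps, Finset.sum_mul]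
  -- RHS : ∑ a', ∑ b', ∑ a, M (a,a') (a,b') * Ψ(E a' b') c' d'
  have lhs_eq : ∑ c, ∑ a, ∑ a', ∑ b, ∑ b', M (a, a') (b, b')
      * (Φ (Matrix.single a b 1) c c * Ψ (Matrix.single a' b' 1) c' d')
      = ∑ a, ∑ a', ∑ b', M (a, a') (a, b') * Ψ (Matrix.single a' b' 1) c' d' := by
    rw [Finset.sum_comm]
    refine Finset.sum_congr rfl fun a _ => ?_
    conv_lhs => rw [Finset.sum_comm]
    refine Finset.sum_congr rfl fun a' _ => ?_
    conv_lhs => rw [Finset.sum_comm]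
    have hb : ∀ b : m₁, ∑ c, ∑ b', M (a, a') (b, b')
        * (Φ (Matrix.single a b 1) c c * Ψ (Matrix.single a' b' 1) c' d')
        = (if a = b then (1 : ℂ) else 0)
          * ∑ b', M (a, a') (b, b') * Ψ (Matrix.single a' b' 1) c' d' := by
      intro b
      rw [← htr a b, Finset.sum_mul]
      refine Finset.sum_congr rfl fun c _ => ?_
      rw [Finset.mul_sum]
      refine Finset.sum_congr rfl fun b' _ => by ring
    simp only [hb, ite_mul, one_mul, zero_mul, Finset.sum_ite_eq, Finset.mem_univ, if_true]
  rw [lhs_eq]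
  exact sum_rot₃ fun a a' b' =>
    M (a, a') (a, b') * Ψ (Matrix.single a' b' 1) c' d'

end Dev4
end QI
namespace QI
section Dev5
variable {n m k m₁ m₂ k₁ k₂ ι κ ι₁ ι₂ κ₁ κ₂ : Type*}

lemma isTP_tensorMap [Fintype m₁] [DecidableEq m₁] [Fintype m₂] [DecidableEq m₂]
    [Fintype k₁] [Fintype k₂]
    {Φ : MatMap m₁ k₁} {Ψ : MatMap m₂ k₂} (hΦ : IsTP Φ) (hΨ : IsTP Ψ) :
    IsTP (tensorMap Φ Ψ) := by
  intro M
  have h2 := LinearMap.congr_fun (ptrace₂_tensorMap Φ hΨ) M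
  simp only [LinearMap.comp_apply] at h2
  rw [← trace_ptrace₂ (tensorMap Φ Ψ M), h2, hΦ, trace_ptrace₂]

/-- Post-processing applied to the instrument `N`. -/
def ppInstr [Fintype ι] [Fintype κ] [Fintype n] [DecidableEq n]
    [Fintype m] [DecidableEq m] [Fintype k]
    (R : ι → Instrument κ m k) (N : Instrument ι n m) : Instrument κ n k where
  op u := ∑ x, (R x).op u ∘ₗ N.op x
  cp u := isCP_sum _ _ fun x _ => IsCP.comp ((R x).cp u) (N.cp x)
  tp := by
    intro ρ
    have h1 : ∀ (x : ι) (M : Matrix m m ℂ), ∑ u, ((R x).op u M).trace = M.trace := by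
      intro x M
      have h := (R x).tp M
      simpa [LinearMap.sum_apply, Matrix.trace_sum] using h
    have h2 := N.tp ρ
    simp only [LinearMap.sum_apply, LinearMap.comp_apply, Matrix.trace_sum]
    rw [Finset.sum_comm]
    simp only [h1]
    simpa [LinearMap.sum_apply, Matrix.trace_sum] using h2

/-- Joint instrument post-processed on both factors. -/
def jointPP [Fintype ι₁] [Fintype ι₂] [Fintype κ₁] [Fintype κ₂]
    [Fintype n] [DecidableEq n]
    [Fintype m₁] [DecidableEq m₁] [Fintype m₂] [DecidableEq m₂]
    [Fintype k₁] [Fintype k₂]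
    (R₁ : ι₁ → Instrument κ₁ m₁ k₁) (R₂ : ι₂ → Instrument κ₂ m₂ k₂)
    (K : Instrument (ι₁ × ι₂) n (m₁ × m₂)) : Instrument (κ₁ × κ₂) n (k₁ × k₂) where
  op w := ∑ p : ι₁ × ι₂, tensorMap ((R₁ p.1).op w.1) ((R₂ p.2).op w.2) ∘ₗ K.op p
  cp w := isCP_sum _ _ fun p _ =>
    IsCP.comp (isCP_tensorMap ((R₁ p.1).cp w.1) ((R₂ p.2).cp w.2)) (K.cp p)
  tp := by
    intro ρ
    have h1 : ∀ (p : ι₁ × ι₂) (M : Matrix (m₁ × m₂) (m₁ × m₂) ℂ),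
        ∑ w : κ₁ × κ₂, (tensorMap ((R₁ p.1).op w.1) ((R₂ p.2).op w.2) M).trace
          = M.trace := by
      intro p M
      have hT := isTP_tensorMap (Φ := ∑ u, (R₁ p.1).op u) (Ψ := ∑ v, (R₂ p.2).op v)
        (R₁ p.1).tp (R₂ p.2).tp M
      rw [tensorMap_sum_left] at hT
      simp only [LinearMap.sum_apply, Matrix.trace_sum] at hT
      rw [Fintype.sum_prod_type]
      calc ∑ u, ∑ v, (tensorMap ((R₁ p.1).op u) ((R₂ p.2).op v) M).trace
          = ∑ u, (tensorMap ((R₁ p.1).op u) (∑ v, (R₂ p.2).op v) M).trace := by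
            refine Finset.sum_congr rfl fun u _ => ?_
            rw [tensorMap_sum_right]
            simp [LinearMap.sum_apply, Matrix.trace_sum]
        _ = M.trace := hT
    have h2 := K.tp ρ
    simp only [LinearMap.sum_apply, LinearMap.comp_apply, Matrix.trace_sum]
    rw [Finset.sum_comm]
    simp only [h1]
    simpa [LinearMap.sum_apply, Matrix.trace_sum] using h2

end Dev5
end QI
namespace QI
section Dev6
variable {n m₁ m₂ k₁ k₂ ι₁ ι₂ κ₁ κ₂ : Type*}

lemma RI_mem_transfer [Fintype ι₁] [Fintype ι₂] [Fintype κ₁] [Fintype κ₂]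
    [Fintype n] [DecidableEq n]
    [Fintype m₁] [DecidableEq m₁] [Fintype m₂] [DecidableEq m₂]
    [Fintype k₁] [DecidableEq k₁] [Fintype k₂] [DecidableEq k₂]
    (I₁ : Instrument ι₁ n m₁) (I₂ : Instrument ι₂ n m₂)
    (J₁ : Instrument κ₁ n k₁) (J₂ : Instrument κ₂ n k₂)
    (hpp₁ : PostProcessingOf J₁ I₁) (hpp₂ : PostProcessingOf J₂ I₂) (r : ℝ)
    (hr : 0 ≤ r ∧
      ∃ (N₁ : Instrument ι₁ n m₁) (N₂ : Instrument ι₂ n m₂)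
        (J : Instrument (ι₁ × ι₂) n (m₁ × m₂)),
        (∀ x, ((1 + r : ℝ) : ℂ)⁻¹ • (I₁.op x + (r : ℂ) • N₁.op x)
            = ∑ y, ptrace₂ ∘ₗ J.op (x, y)) ∧
        (∀ y, ((1 + r : ℝ) : ℂ)⁻¹ • (I₂.op y + (r : ℂ) • N₂.op y)
            = ∑ x, ptrace₁ ∘ₗ J.op (x, y))) :
    0 ≤ r ∧
      ∃ (N₁ : Instrument κ₁ n k₁) (N₂ : Instrument κ₂ n k₂)
        (J : Instrument (κ₁ × κ₂) n (k₁ × k₂)),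
        (∀ x, ((1 + r : ℝ) : ℂ)⁻¹ • (J₁.op x + (r : ℂ) • N₁.op x)
            = ∑ y, ptrace₂ ∘ₗ J.op (x, y)) ∧
        (∀ y, ((1 + r : ℝ) : ℂ)⁻¹ • (J₂.op y + (r : ℂ) • N₂.op y)
            = ∑ x, ptrace₁ ∘ₗ J.op (x, y)) := by
  obtain ⟨hr0, N₁, N₂, K, hK₁, hK₂⟩ := hr
  obtain ⟨R₁, hR₁⟩ := hpp₁
  obtain ⟨R₂, hR₂⟩ := hpp₂
  refine ⟨hr0, ppInstr R₁ N₁, ppInstr R₂ N₂, jointPP R₁ R₂ K, ?_, ?_⟩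
  · intro u
    symm
    calc ∑ v, ptrace₂ ∘ₗ (jointPP R₁ R₂ K).op (u, v)
        = ∑ v, ∑ p : ι₁ × ι₂,
            (ptrace₂ ∘ₗ tensorMap ((R₁ p.1).op u) ((R₂ p.2).op v)) ∘ₗ K.op p := by
          refine Finset.sum_congr rfl fun v _ => ?_
          show ptrace₂ ∘ₗ (∑ p : ι₁ × ι₂,
              tensorMap ((R₁ p.1).op u) ((R₂ p.2).op v) ∘ₗ K.op p) = _
          rw [comp_sum']
          exact Finset.sum_congr rfl fun p _ => (LinearMap.comp_assoc _ _ _).symm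
      _ = ∑ p : ι₁ × ι₂,
            (∑ v, ptrace₂ ∘ₗ tensorMap ((R₁ p.1).op u) ((R₂ p.2).op v)) ∘ₗ K.op p := by
          rw [Finset.sum_comm]
          exact Finset.sum_congr rfl fun p _ => (sum_comp' _ _ _).symm
      _ = ∑ p : ι₁ × ι₂, ((R₁ p.1).op u ∘ₗ ptrace₂) ∘ₗ K.op p := by
          refine Finset.sum_congr rfl fun p _ => ?_
          congr 1
          rw [show (∑ v, ptrace₂ ∘ₗ tensorMap ((R₁ p.1).op u) ((R₂ p.2).op v))
              = ptrace₂ ∘ₗ tensorMap ((R₁ p.1).op u) (∑ v, (R₂ p.2).op v) from by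
            rw [tensorMap_sum_right, comp_sum']]
          exact ptrace₂_tensorMap _ (R₂ p.2).tp
      _ = ∑ x, (R₁ x).op u ∘ₗ (∑ y, ptrace₂ ∘ₗ K.op (x, y)) := by
          rw [Fintype.sum_prod_type]
          refine Finset.sum_congr rfl fun x _ => ?_
          rw [comp_sum']
          exact Finset.sum_congr rfl fun y _ => LinearMap.comp_assoc _ _ _
      _ = ∑ x, (R₁ x).op u ∘ₗ
            (((1 + r : ℝ) : ℂ)⁻¹ • (I₁.op x + (r : ℂ) • N₁.op x)) := by
          exact Finset.sum_congr rfl fun x _ => by rw [hK₁ x]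
      _ = ((1 + r : ℝ) : ℂ)⁻¹ • (J₁.op u + (r : ℂ) • (ppInstr R₁ N₁).op u) := by
          rw [hR₁ u]
          show _ = ((1 + r : ℝ) : ℂ)⁻¹ • ((∑ x, (R₁ x).op u ∘ₗ I₁.op x)
            + (r : ℂ) • ∑ x, (R₁ x).op u ∘ₗ N₁.op x)
          apply LinearMap.ext; intro ρ
          simp only [LinearMap.sum_apply, LinearMap.comp_apply, LinearMap.smul_apply,
            LinearMap.add_apply, map_add, _root_.map_smul, Finset.smul_sum,
            Finset.sum_add_distrib, smul_add]
  · intro v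
    symm
    calc ∑ u, ptrace₁ ∘ₗ (jointPP R₁ R₂ K).op (u, v)
        = ∑ u, ∑ p : ι₁ × ι₂,
            (ptrace₁ ∘ₗ tensorMap ((R₁ p.1).op u) ((R₂ p.2).op v)) ∘ₗ K.op p := by
          refine Finset.sum_congr rfl fun u _ => ?_
          show ptrace₁ ∘ₗ (∑ p : ι₁ × ι₂,
              tensorMap ((R₁ p.1).op u) ((R₂ p.2).op v) ∘ₗ K.op p) = _
          rw [comp_sum']
          exact Finset.sum_congr rfl fun p _ => (LinearMap.comp_assoc _ _ _).symm
      _ = ∑ p : ι₁ × ι₂,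
            (∑ u, ptrace₁ ∘ₗ tensorMap ((R₁ p.1).op u) ((R₂ p.2).op v)) ∘ₗ K.op p := by
          rw [Finset.sum_comm]
          exact Finset.sum_congr rfl fun p _ => (sum_comp' _ _ _).symm
      _ = ∑ p : ι₁ × ι₂, ((R₂ p.2).op v ∘ₗ ptrace₁) ∘ₗ K.op p := by
          refine Finset.sum_congr rfl fun p _ => ?_
          congr 1
          rw [show (∑ u, ptrace₁ ∘ₗ tensorMap ((R₁ p.1).op u) ((R₂ p.2).op v))
              = ptrace₁ ∘ₗ tensorMap (∑ u, (R₁ p.1).op u) ((R₂ p.2).op v) from by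
            rw [tensorMap_sum_left, comp_sum']]
          exact ptrace₁_tensorMap _ (R₁ p.1).tp
      _ = ∑ y, (R₂ y).op v ∘ₗ (∑ x, ptrace₁ ∘ₗ K.op (x, y)) := by
          rw [Fintype.sum_prod_type, Finset.sum_comm]
          refine Finset.sum_congr rfl fun y _ => ?_
          rw [comp_sum']
          exact Finset.sum_congr rfl fun x _ => LinearMap.comp_assoc _ _ _
      _ = ∑ y, (R₂ y).op v ∘ₗ
            (((1 + r : ℝ) : ℂ)⁻¹ • (I₂.op y + (r : ℂ) • N₂.op y)) := by
          exact Finset.sum_congr rfl fun y _ => by rw [hK₂ y]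
      _ = ((1 + r : ℝ) : ℂ)⁻¹ • (J₂.op v + (r : ℂ) • (ppInstr R₂ N₂).op v) := by
          rw [hR₂ v]
          show _ = ((1 + r : ℝ) : ℂ)⁻¹ • ((∑ y, (R₂ y).op v ∘ₗ I₂.op y)
            + (r : ℂ) • ∑ y, (R₂ y).op v ∘ₗ N₂.op y)
          apply LinearMap.ext; intro ρ
          simp only [LinearMap.sum_apply, LinearMap.comp_apply, LinearMap.smul_apply,
            LinearMap.add_apply, map_add, _root_.map_smul, Finset.smul_sum,
            Finset.sum_add_distrib, smul_add]

end Dev6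
end QI


end

open QI in
/-- post-processing equivalent pairs have equal robustness. -/
theorem RI_eq_of_postprocessing_equiv
    {ι₁ ι₂ κ₁ κ₂ n m₁ m₂ k₁ k₂ : Type*}
    [Fintype ι₁] [Fintype ι₂] [Fintype κ₁] [Fintype κ₂]
    [Fintype n] [DecidableEq n]
    [Fintype m₁] [DecidableEq m₁] [Fintype m₂] [DecidableEq m₂]
    [Fintype k₁] [DecidableEq k₁] [Fintype k₂] [DecidableEq k₂]
    (I₁ : Instrument ι₁ n m₁) (I₂ : Instrument ι₂ n m₂)
    (J₁ : Instrument κ₁ n k₁) (J₂ : Instrument κ₂ n k₂)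
    (h₁ : PostProcessingOf J₁ I₁ ∧ PostProcessingOf I₁ J₁)
    (h₂ : PostProcessingOf J₂ I₂ ∧ PostProcessingOf I₂ J₂) :
    RI I₁ I₂ = RI J₁ J₂ := by
  unfold RI
  congr 1
  ext r
  simp only [Set.mem_setOf_eq]
  constructor
  · exact fun h => RI_mem_transfer I₁ I₂ J₁ J₂ h₁.1 h₂.1 r h
  · exact fun h => RI_mem_transfer J₁ J₂ I₁ I₂ h₁.2 h₂.2 r h
end

section
/- Two copies of the instrument J = {Ψ_x(ρ) = ρ/n}_{x=1}^n on a Hilbert space H of dimension at least 2 are not parallel compatible. Equivalently, there is no instrument {Φ_{xy}: L(H)→L(H⊗H)}_{x,y=1}^n with Σ_y tr₂ Φ_{xy} = (1/n)·id and Σ_x tr₁ Φ_{xy} = (1/n)·id (a consequence of the incompatibility of the identity channel with itself / no-cloning). -/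
open Matrix
open scoped Kronecker BigOperators ComplexOrder

open QI in
/-- two copies of `{ρ ↦ ρ/n}` are not parallel compatible (no-cloning). -/
theorem identity_instrument_not_self_compatible {n : Type*} [Fintype n] [DecidableEq n]
    (hdim : 2 ≤ Fintype.card n) (N : ℕ)
    (J : Instrument (Fin N) n n)
    (hJ : ∀ x, J.op x = (N : ℂ)⁻¹ • LinearMap.id) :
    ¬ ParallelCompatible J J := by
  rintro ⟨K, hK2, hK1⟩
  -- `N ≠ 0`
  have hN : (N : ℂ) ≠ 0 := by
    intro h0
    have hN0 : N = 0 := by exact_mod_cast h0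
    subst hN0
    have htp := J.tp (1 : Matrix n n ℂ)
    simp only [Finset.univ_eq_empty, Finset.sum_empty, LinearMap.zero_apply,
      Matrix.trace_zero, Matrix.trace_one] at htp
    have hcn : (Fintype.card n : ℂ) = 0 := htp.symm
    have : Fintype.card n = 0 := by exact_mod_cast hcn
    omega
  set Λ : MatMap n (n × n) := ∑ p : Fin N × Fin N, K.op p with hΛ
  -- the Choi matrix of `Λ` is positive semidefinite
  have hCP : (choi Λ).PosSemidef := by
    have hchoi : choi Λ = ∑ p : Fin N × Fin N, choi (K.op p) := by
      ext p q
      simp [hΛ, choi, Matrix.sum_apply]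
    rw [hchoi]
    refine Finset.sum_induction _ _ (fun A B hA hB => ?_) Matrix.PosSemidef.zero
      (fun p _ => K.cp p)
    exact hA.add hB
  have hmarg : (∑ x, J.op x : MatMap n n) = LinearMap.id := by
    simp only [hJ, Finset.sum_const, Finset.card_univ, Fintype.card_fin]
    rw [← Nat.cast_smul_eq_nsmul ℂ, smul_smul, mul_inv_cancel₀ hN, one_smul]
  -- the marginals of `Λ` are the identity channel
  have h2 : ptrace₂ ∘ₗ Λ = LinearMap.id := by
    apply LinearMap.ext; intro ρ
    have hs : (ptrace₂ ∘ₗ Λ) ρ = ∑ x, ∑ y, (ptrace₂ ∘ₗ K.op (x, y)) ρ := by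
      simp [hΛ, LinearMap.sum_apply, map_sum, Fintype.sum_prod_type]
    rw [hs]
    calc ∑ x, ∑ y, (ptrace₂ ∘ₗ K.op (x, y)) ρ
        = ∑ x, (J.op x) ρ := by
          refine Finset.sum_congr rfl fun x _ => ?_
          rw [← hK2 x]; simp [LinearMap.sum_apply]
      _ = ρ := by rw [← LinearMap.sum_apply, hmarg]; rfl
  have h1 : ptrace₁ ∘ₗ Λ = LinearMap.id := by
    apply LinearMap.ext; intro ρ
    have hs : (ptrace₁ ∘ₗ Λ) ρ = ∑ y, ∑ x, (ptrace₁ ∘ₗ K.op (x, y)) ρ := by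
      simp [hΛ, LinearMap.sum_apply, map_sum, Fintype.sum_prod_type_right]
    rw [hs]
    calc ∑ y, ∑ x, (ptrace₁ ∘ₗ K.op (x, y)) ρ
        = ∑ y, (J.op y) ρ := by
          refine Finset.sum_congr rfl fun y _ => ?_
          rw [← hK1 y]; simp [LinearMap.sum_apply]
      _ = ρ := by rw [← LinearMap.sum_apply, hmarg]; rfl
  -- write the Choi matrix as `Bᴴ * B`
  obtain ⟨B, hB⟩ : ∃ B : Matrix (n × n × n) (n × n × n) ℂ, choi Λ = Bᴴ * B := by
    open scoped MatrixOrder in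
    obtain ⟨B, hB⟩ := CStarAlgebra.nonneg_iff_eq_star_mul_self.mp hCP.nonneg
    exact ⟨B, hB⟩
  -- entrywise marginal conditions on the Choi matrix
  have e2 : ∀ i j k k' : n, ∑ l, choi Λ (i, (k, l)) (j, (k', l))
      = Matrix.single i j (1:ℂ) k k' := by
    intro i j k k'
    have := congrArg (fun Φ : MatMap n n => Φ (Matrix.single i j 1) k k') h2
    simpa [ptrace₂, choi] using this
  have e1 : ∀ i j l l' : n, ∑ k, choi Λ (i, (k, l)) (j, (k, l'))
      = Matrix.single i j (1:ℂ) l l' := by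
    intro i j l l'
    have := congrArg (fun Φ : MatMap n n => Φ (Matrix.single i j 1) l l') h1
    simpa [ptrace₁, choi] using this
  -- columns `(i, (k, l))` of `B` with `l ≠ i` vanish
  have hcol : ∀ i k l : n, l ≠ i → ∀ t, B t (i, (k, l)) = 0 := by
    intro i k l hl t
    have h0 := e1 i i l l
    rw [Matrix.single_apply_of_ne _ _ _ _ _ (fun h => hl h.1.symm), hB] at h0
    simp only [Matrix.mul_apply, Matrix.conjTranspose_apply] at h0
    have hk := (Finset.sum_eq_zero_iff_of_nonneg
      (fun k _ => Finset.sum_nonneg fun t _ => star_mul_self_nonneg _)).mp h0 k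
      (Finset.mem_univ k)
    have ht := (Finset.sum_eq_zero_iff_of_nonneg
      (fun t _ => star_mul_self_nonneg _)).mp hk t (Finset.mem_univ t)
    exact (CStarRing.star_mul_self_eq_zero_iff _).mp ht
  -- final contradiction (no-cloning)
  obtain ⟨a, b, hab⟩ := Fintype.exists_pair_of_one_lt_card (by omega) (α := n)
  have hone := e2 a b a b
  rw [Matrix.single_apply_same] at hone
  have hzero : ∑ l, choi Λ (a, (a, l)) (b, (b, l)) = 0 := by
    refine Finset.sum_eq_zero fun l _ => ?_
    rw [hB, Matrix.mul_apply]
    refine Finset.sum_eq_zero fun t _ => ?_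
    by_cases hla : l = a
    · subst hla
      rw [Matrix.conjTranspose_apply, hcol b b l hab t, mul_zero]
    · rw [Matrix.conjTranspose_apply, hcol a a l hla t, star_zero, zero_mul]
  rw [hzero] at hone
  exact one_ne_zero hone.symm
end

section
/- For generic measure-and-prepare instruments 𝔍'_{A₁} and 𝔍'_{A₂} (with arbitrary fixed prepared states), R_I(𝔍'_{A₁}, 𝔍'_{A₂}) = R_M(A₁, A₂). -/
open Matrix
open scoped Kronecker BigOperators ComplexOrder

noncomputable section Aux
open QI Matrix

namespace QIAux

variable {ι ι₁ ι₂ n m m₁ m₂ : Type*}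

lemma trace_stdBasis_mul [Fintype n] [DecidableEq n] (A : Matrix n n ℂ) (i j : n) :
    (Matrix.single j i (1 : ℂ) * A).trace = A i j := by
  simp [Matrix.trace, Matrix.diag, Matrix.mul_apply, Matrix.single, Matrix.of_apply,
    Finset.sum_ite_eq, ite_and]

/-- The induced effect `Φ ↦ Φ*(1)` as a linear map. -/
def eff [Fintype n] [DecidableEq n] [Fintype m] : MatMap n m →ₗ[ℂ] Matrix n n ℂ where
  toFun Φ := Matrix.of fun i j => (Φ (Matrix.single j i 1)).trace
  map_add' Φ Ψ := by ext i j; simp [Matrix.trace_add]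
  map_smul' c Φ := by ext i j; simp [Matrix.trace_smul]

lemma eff_apply [Fintype n] [DecidableEq n] [Fintype m] (Φ : MatMap n m) (i j : n) :
    eff Φ i j = (Φ (Matrix.single j i 1)).trace := rfl

lemma mpOp_apply [Fintype n] [Fintype m] (A : Matrix n n ℂ) (σ : Matrix m m ℂ)
    (ρ : Matrix n n ℂ) : mpOp A σ ρ = (ρ * A).trace • σ := rfl

lemma eff_mpOp [Fintype n] [DecidableEq n] [Fintype m] (A : Matrix n n ℂ) (σ : Matrix m m ℂ) :
    eff (mpOp A σ) = σ.trace • A := by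
  ext i j
  simp [eff_apply, mpOp_apply, Matrix.trace_smul, trace_stdBasis_mul, mul_comm]

lemma eff_comp_ptrace₂ [Fintype n] [DecidableEq n] [Fintype m₁] [Fintype m₂]
    (Φ : MatMap n (m₁ × m₂)) : eff (ptrace₂ ∘ₗ Φ) = eff Φ := by
  ext i j
  simp only [eff_apply, LinearMap.comp_apply, ptrace₂, LinearMap.coe_mk, AddHom.coe_mk,
    Matrix.trace, Matrix.diag, Matrix.of_apply]
  simp only [Fintype.sum_prod_type]

lemma eff_comp_ptrace₁ [Fintype n] [DecidableEq n] [Fintype m₁] [Fintype m₂]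
    (Φ : MatMap n (m₁ × m₂)) : eff (ptrace₁ ∘ₗ Φ) = eff Φ := by
  ext i j
  simp only [eff_apply, LinearMap.comp_apply, ptrace₁, LinearMap.coe_mk, AddHom.coe_mk,
    Matrix.trace, Matrix.diag, Matrix.of_apply]
  rw [Finset.sum_comm]
  simp only [Fintype.sum_prod_type]

lemma eff_entry_choi [Fintype n] [DecidableEq n] [Fintype m] (Φ : MatMap n m) (i j : n) :
    eff Φ i j = ∑ k : m, choi Φ (j, k) (i, k) := rfl

lemma eff_posSemidef [Fintype n] [DecidableEq n] [Fintype m] {Φ : MatMap n m}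
    (h : IsCP Φ) : (eff Φ).PosSemidef := by
  classical
  rw [Matrix.posSemidef_iff_dotProduct_mulVec]
  constructor
  · ext i j
    simp only [Matrix.conjTranspose_apply, eff_entry_choi, star_sum]
    exact Finset.sum_congr rfl fun k _ => h.isHermitian.apply _ _
  · intro x
    have key : ∀ k : m, 0 ≤ star (fun p : n × m => if p.2 = k then star (x p.1) else 0) ⬝ᵥ
        (choi Φ) *ᵥ (fun p : n × m => if p.2 = k then star (x p.1) else 0) := fun k => h.dotProduct_mulVec_nonneg _
    have hsum := Finset.sum_nonneg (fun k (_ : k ∈ Finset.univ) => key k)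
    have e1 : ∀ k : m, (star (fun p : n × m => if p.2 = k then star (x p.1) else 0)) ⬝ᵥ
        (choi Φ) *ᵥ (fun p : n × m => if p.2 = k then star (x p.1) else 0)
        = ∑ j, ∑ i, star (x i) * choi Φ (j, k) (i, k) * x j := by
      intro k
      simp only [dotProduct, Matrix.mulVec, Pi.star_apply, Fintype.sum_prod_type,
        apply_ite, star_star, star_zero, ite_mul, mul_ite, mul_zero, zero_mul,
        Finset.sum_ite_eq', Finset.mem_univ, if_true]
      refine Finset.sum_congr rfl fun j _ => ?_
      rw [Finset.mul_sum]
      refine Finset.sum_congr rfl fun i _ => ?_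
      ring
    have e2 : star x ⬝ᵥ (eff Φ) *ᵥ x
        = ∑ i, ∑ j, ∑ k : m, star (x i) * choi Φ (j, k) (i, k) * x j := by
      simp only [dotProduct, Matrix.mulVec, Pi.star_apply, eff_entry_choi]
      refine Finset.sum_congr rfl fun i _ => ?_
      rw [Finset.mul_sum]
      refine Finset.sum_congr rfl fun j _ => ?_
      rw [Finset.sum_mul, Finset.mul_sum]
      refine Finset.sum_congr rfl fun k _ => ?_
      ring
    have e3 : ∑ k : m, ∑ j, ∑ i, star (x i) * choi Φ (j, k) (i, k) * x j
        = ∑ i, ∑ j, ∑ k : m, star (x i) * choi Φ (j, k) (i, k) * x j :=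
      calc ∑ k : m, ∑ j, ∑ i, star (x i) * choi Φ (j, k) (i, k) * x j
          = ∑ j, ∑ k : m, ∑ i, star (x i) * choi Φ (j, k) (i, k) * x j := Finset.sum_comm
        _ = ∑ j, ∑ i, ∑ k : m, star (x i) * choi Φ (j, k) (i, k) * x j :=
            Finset.sum_congr rfl fun j _ => Finset.sum_comm
        _ = ∑ i, ∑ j, ∑ k : m, star (x i) * choi Φ (j, k) (i, k) * x j := Finset.sum_comm
    rw [e2, ← e3, ← Finset.sum_congr rfl fun k (_ : k ∈ Finset.univ) => e1 k]
    exact hsum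


lemma eff_sum_eq_one [Fintype ι] [Fintype n] [DecidableEq n] [Fintype m]
    {Φ : ι → MatMap n m} (h : IsTP (∑ x, Φ x)) : ∑ x, eff (Φ x) = 1 := by
  rw [← map_sum]
  ext i j
  rw [eff_apply, h]
  simp [Matrix.trace, Matrix.diag, Matrix.single, Matrix.of_apply,
    Finset.sum_ite_eq, ite_and, Matrix.one_apply, eq_comm]

lemma kron_conjTranspose [Fintype m₁] [Fintype m₂] (A : Matrix m₁ m₁ ℂ) (B : Matrix m₂ m₂ ℂ) :
    (A ⊗ₖ B)ᴴ = Aᴴ ⊗ₖ Bᴴ := by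
  ext ⟨i, k⟩ ⟨j, l⟩
  simp [Matrix.conjTranspose_apply, Matrix.kroneckerMap_apply]

lemma kron_posSemidef [Fintype m₁] [DecidableEq m₁] [Fintype m₂] [DecidableEq m₂]
    {A : Matrix m₁ m₁ ℂ} {B : Matrix m₂ m₂ ℂ}
    (hA : A.PosSemidef) (hB : B.PosSemidef) : (A ⊗ₖ B).PosSemidef := by
  exact hA.kronecker hB

lemma choi_mpOp [Fintype n] [DecidableEq n] [Fintype m] (A : Matrix n n ℂ)
    (σ : Matrix m m ℂ) : choi (mpOp A σ) = Aᵀ ⊗ₖ σ := by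
  ext ⟨i, k⟩ ⟨j, l⟩
  simp [choi, mpOp_apply, Matrix.kroneckerMap_apply, trace_stdBasis_mul,
    Matrix.transpose_apply]

lemma mpOp_isCP [Fintype n] [DecidableEq n] [Fintype m] [DecidableEq m]
    {A : Matrix n n ℂ} {σ : Matrix m m ℂ}
    (hA : A.PosSemidef) (hσ : σ.PosSemidef) : IsCP (mpOp A σ) := by
  rw [IsCP, choi_mpOp]
  exact kron_posSemidef hA.transpose hσ

/-- The measure-and-prepare instrument for a POVM and a family of states. -/
def mpInstr [Fintype ι] [Fintype n] [DecidableEq n] [Fintype m] [DecidableEq m]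
    (A : ι → Matrix n n ℂ) (σ : ι → Matrix m m ℂ)
    (hA : ∀ x, (A x).PosSemidef) (hsum : ∑ x, A x = 1)
    (hσp : ∀ x, (σ x).PosSemidef) (hσt : ∀ x, (σ x).trace = 1) :
    Instrument ι n m where
  op x := mpOp (A x) (σ x)
  cp x := mpOp_isCP (hA x) (hσp x)
  tp ρ := by
    simp only [LinearMap.sum_apply, Matrix.trace_sum, mpOp_apply, Matrix.trace_smul,
      smul_eq_mul, hσt, mul_one]
    rw [← Matrix.trace_sum, ← Matrix.mul_sum, hsum, Matrix.mul_one]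

/-- `mpOp` as linear in the effect, for a fixed state. -/
def mpOpL [Fintype n] [Fintype m] (σ : Matrix m m ℂ) :
    Matrix n n ℂ →ₗ[ℂ] MatMap n m where
  toFun A := mpOp A σ
  map_add' A B := by
    refine LinearMap.ext fun ρ => ?_
    simp [mpOp_apply, Matrix.mul_add, Matrix.trace_add, add_smul]
  map_smul' c A := by
    refine LinearMap.ext fun ρ => ?_
    simp [mpOp_apply, Matrix.mul_smul, Matrix.trace_smul, smul_smul, mul_comm]

lemma mpOpL_apply [Fintype n] [Fintype m] (σ : Matrix m m ℂ) (A : Matrix n n ℂ) :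
    mpOpL σ A = mpOp A σ := rfl

lemma ptrace₂_kron [Fintype m₁] [Fintype m₂] (σ₁ : Matrix m₁ m₁ ℂ) (σ₂ : Matrix m₂ m₂ ℂ) :
    ptrace₂ (σ₁ ⊗ₖ σ₂) = σ₂.trace • σ₁ := by
  ext i j
  simp only [ptrace₂, LinearMap.coe_mk, AddHom.coe_mk, Matrix.of_apply,
    Matrix.kroneckerMap_apply, Matrix.smul_apply, Matrix.trace, Matrix.diag, smul_eq_mul]
  rw [← Finset.mul_sum, mul_comm]

lemma ptrace₁_kron [Fintype m₁] [Fintype m₂] (σ₁ : Matrix m₁ m₁ ℂ) (σ₂ : Matrix m₂ m₂ ℂ) :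
    ptrace₁ (σ₁ ⊗ₖ σ₂) = σ₁.trace • σ₂ := by
  ext i j
  simp only [ptrace₁, LinearMap.coe_mk, AddHom.coe_mk, Matrix.of_apply,
    Matrix.kroneckerMap_apply, Matrix.smul_apply, Matrix.trace, Matrix.diag, smul_eq_mul]
  rw [← Finset.sum_mul, mul_comm]

lemma ptrace₂_comp_mpOp_kron [Fintype n] [Fintype m₁] [Fintype m₂]
    (A : Matrix n n ℂ) {σ₁ : Matrix m₁ m₁ ℂ} {σ₂ : Matrix m₂ m₂ ℂ} (h : σ₂.trace = 1) :
    ptrace₂ ∘ₗ mpOp A (σ₁ ⊗ₖ σ₂) = mpOp A σ₁ := by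
  refine LinearMap.ext fun ρ => ?_
  simp [mpOp_apply, _root_.map_smul, ptrace₂_kron, h]

lemma ptrace₁_comp_mpOp_kron [Fintype n] [Fintype m₁] [Fintype m₂]
    (A : Matrix n n ℂ) {σ₁ : Matrix m₁ m₁ ℂ} {σ₂ : Matrix m₂ m₂ ℂ} (h : σ₁.trace = 1) :
    ptrace₁ ∘ₗ mpOp A (σ₁ ⊗ₖ σ₂) = mpOp A σ₂ := by
  refine LinearMap.ext fun ρ => ?_
  simp [mpOp_apply, _root_.map_smul, ptrace₁_kron, h]

end QIAux

end Aux


open QI in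
/-- for generic measure-and-prepare instruments, `R_I = R_M`. -/
theorem RI_eq_RM_measure_prepare {ι₁ ι₂ n m₁ m₂ : Type*}
    [Fintype ι₁] [Fintype ι₂] [Fintype n] [DecidableEq n] [Fintype m₁] [Fintype m₂]
    (A₁ : ι₁ → Matrix n n ℂ) (A₂ : ι₂ → Matrix n n ℂ)
    (hA₁ : IsPOVM A₁) (hA₂ : IsPOVM A₂)
    (ρ₁ : ι₁ → Matrix m₁ m₁ ℂ) (hρ₁ : ∀ x, IsState (ρ₁ x))
    (ρ₂ : ι₂ → Matrix m₂ m₂ ℂ) (hρ₂ : ∀ y, IsState (ρ₂ y))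
    (S₁ : Instrument ι₁ n m₁) (hS₁ : ∀ x, S₁.op x = mpOp (A₁ x) (ρ₁ x))
    (S₂ : Instrument ι₂ n m₂) (hS₂ : ∀ y, S₂.op y = mpOp (A₂ y) (ρ₂ y)) :
    RI S₁ S₂ = RM A₁ A₂ := by
  classical
  rcases hA₁ with ⟨hA₁p, hA₁s⟩
  rcases hA₂ with ⟨hA₂p, hA₂s⟩
  unfold RI RM
  congr 1
  ext r
  constructor
  · rintro ⟨hr, N₁, N₂, J, h1, h2⟩
    refine ⟨hr, fun x => QIAux.eff (N₁.op x), fun y => QIAux.eff (N₂.op y),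
      fun p => QIAux.eff (J.op p), ⟨fun x => QIAux.eff_posSemidef (N₁.cp x),
        QIAux.eff_sum_eq_one N₁.tp⟩, ⟨fun y => QIAux.eff_posSemidef (N₂.cp y),
        QIAux.eff_sum_eq_one N₂.tp⟩, fun p => QIAux.eff_posSemidef (J.cp p), ?_, ?_⟩
    · intro x
      have := congrArg QIAux.eff (h1 x)
      rw [_root_.map_smul, map_add, _root_.map_smul, map_sum] at this
      simp only [QIAux.eff_comp_ptrace₂] at this
      rw [hS₁ x, QIAux.eff_mpOp, (hρ₁ x).2, one_smul] at this
      exact this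
    · intro y
      have := congrArg QIAux.eff (h2 y)
      rw [_root_.map_smul, map_add, _root_.map_smul, map_sum] at this
      simp only [QIAux.eff_comp_ptrace₁] at this
      rw [hS₂ y, QIAux.eff_mpOp, (hρ₂ y).2, one_smul] at this
      exact this
  · rintro ⟨hr, B₁, B₂, G, hB₁, hB₂, hG, g1, g2⟩
    have hc : ((1 + r : ℝ) : ℂ) ≠ 0 := by
      exact_mod_cast ne_of_gt (by linarith : (0:ℝ) < 1 + r)
    have hGsum : ∑ p : ι₁ × ι₂, G p = 1 := by
      rw [Fintype.sum_prod_type]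
      have : ∑ x, ∑ y, G (x, y) = ∑ x, ((1 + r : ℝ) : ℂ)⁻¹ • (A₁ x + (r : ℂ) • B₁ x) := by
        refine Finset.sum_congr rfl fun x _ => (g1 x).symm
      rw [this, ← Finset.smul_sum, Finset.sum_add_distrib, hA₁s, ← Finset.smul_sum, hB₁.2]
      have h11 : (1 : Matrix n n ℂ) + (r : ℂ) • 1 = ((1 + r : ℝ) : ℂ) • 1 := by
        push_cast
        rw [add_smul, one_smul]
      rw [h11, smul_smul, inv_mul_cancel₀ hc, one_smul]
    refine ⟨hr,
      QIAux.mpInstr B₁ ρ₁ hB₁.1 hB₁.2 (fun x => (hρ₁ x).1) (fun x => (hρ₁ x).2),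
      QIAux.mpInstr B₂ ρ₂ hB₂.1 hB₂.2 (fun y => (hρ₂ y).1) (fun y => (hρ₂ y).2),
      QIAux.mpInstr G (fun p => ρ₁ p.1 ⊗ₖ ρ₂ p.2) hG hGsum
        (fun p => QIAux.kron_posSemidef (hρ₁ p.1).1 (hρ₂ p.2).1)
        (fun p => by rw [Matrix.trace_kronecker, (hρ₁ p.1).2, (hρ₂ p.2).2, mul_one]),
      ?_, ?_⟩
    · intro x
      have hR : ∀ y, ptrace₂ ∘ₗ (QIAux.mpInstr G (fun p => ρ₁ p.1 ⊗ₖ ρ₂ p.2) hG hGsum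
          (fun p => QIAux.kron_posSemidef (hρ₁ p.1).1 (hρ₂ p.2).1)
          (fun p => by rw [Matrix.trace_kronecker, (hρ₁ p.1).2, (hρ₂ p.2).2, mul_one])).op (x, y)
          = mpOp (G (x, y)) (ρ₁ x) := fun y =>
        QIAux.ptrace₂_comp_mpOp_kron _ (hρ₂ y).2
      rw [Finset.sum_congr rfl fun y _ => hR y]
      simp only [← QIAux.mpOpL_apply (ρ₁ x), ← map_sum, ← g1 x, _root_.map_smul, map_add, _root_.map_smul]
      rw [QIAux.mpOpL_apply, hS₁ x]
      rfl
    · intro y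
      have hR : ∀ x, ptrace₁ ∘ₗ (QIAux.mpInstr G (fun p => ρ₁ p.1 ⊗ₖ ρ₂ p.2) hG hGsum
          (fun p => QIAux.kron_posSemidef (hρ₁ p.1).1 (hρ₂ p.2).1)
          (fun p => by rw [Matrix.trace_kronecker, (hρ₁ p.1).2, (hρ₂ p.2).2, mul_one])).op (x, y)
          = mpOp (G (x, y)) (ρ₂ y) := fun x =>
        QIAux.ptrace₁_comp_mpOp_kron _ (hρ₁ x).2
      rw [Finset.sum_congr rfl fun x _ => hR x]
      simp only [← QIAux.mpOpL_apply (ρ₂ y), ← map_sum, ← g2 y, _root_.map_smul, map_add, _root_.map_smul]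
      rw [QIAux.mpOpL_apply, hS₂ y]
      rfl
end
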